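/- arXiv:1810.09157 — 2 statements merged into one kernel-verified Lean document; each statement's English description precedes it below -/
import Mathlib

section
/- The total contact force F(a) = (G/(1−ν))·((a² + R²)·log((R+a)/(R−a)) − 2aR) for a spherical indenter is strictly positive and strictly increasing in the contact radius a on (0, R), provided G > 0 and 0 < ν < 1. -/
theorem stmt_3 (R G ν : ℝ) (hR : 0 < R) (hG : 0 < G) (hν : ν ∈ Set.Ioo (0 : ℝ) 1) :
    (∀ a ∈ Set.Ioo (0 : ℝ) R,
      0 < G / (1 - ν) * ((a ^ 2 + R ^ 2) * Real.log ((R + a) / (R - a)) - 2 * a * R)) ∧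
    StrictMonoOn
      (fun a => G / (1 - ν) * ((a ^ 2 + R ^ 2) * Real.log ((R + a) / (R - a)) - 2 * a * R))
      (Set.Ioo (0 : ℝ) R) := by
  obtain ⟨hν0, hν1⟩ := hν
  have hC : 0 < G / (1 - ν) := div_pos hG (by linarith)
  set g : ℝ → ℝ := fun a => (a ^ 2 + R ^ 2) * Real.log ((R + a) / (R - a)) - 2 * a * R
    with hgdef
  -- continuity of g on [0, R)
  have hcont : ContinuousOn g (Set.Ico 0 R) := by
    apply ContinuousOn.sub
    · apply ContinuousOn.mul (by fun_prop)
      apply ContinuousOn.log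
      · apply ContinuousOn.div (by fun_prop) (by fun_prop)
        intro x hx
        simp only [Set.mem_Ico] at hx
        have : 0 < R - x := by linarith [hx.2]
        exact ne_of_gt this
      · intro x hx
        simp only [Set.mem_Ico] at hx
        have h1 : 0 < R + x := by linarith [hx.1]
        have h2 : 0 < R - x := by linarith [hx.2]
        positivity
    · fun_prop
  -- derivative of g on (0, R)
  have hderiv : ∀ x ∈ Set.Ioo (0 : ℝ) R, HasDerivAt g
      (2 * x * Real.log ((R + x) / (R - x)) + (x ^ 2 + R ^ 2) * (2 * R / ((R - x) ^ 2))
        / ((R + x) / (R - x)) - 2 * R) x := by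
    intro x hx
    obtain ⟨hx0, hxR⟩ := hx
    have h1 : (0 : ℝ) < R + x := by linarith
    have h2 : (0 : ℝ) < R - x := by linarith
    have hq : HasDerivAt (fun a => (R + a) / (R - a))
        ((1 * (R - x) - (R + x) * (-1)) / (R - x) ^ 2) x := by
      exact HasDerivAt.div ((hasDerivAt_id x).const_add R)
        ((hasDerivAt_id x).neg.const_add R) (ne_of_gt h2)
    have hq' : HasDerivAt (fun a => (R + a) / (R - a)) (2 * R / (R - x) ^ 2) x := by
      convert hq using 1; ring
    have hlog : HasDerivAt (fun a => Real.log ((R + a) / (R - a)))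
        ((2 * R / (R - x) ^ 2) / ((R + x) / (R - x))) x := by
      exact hq'.log (by positivity)
    have hpoly : HasDerivAt (fun a : ℝ => a ^ 2 + R ^ 2) (2 * x) x := by
      simpa using (hasDerivAt_pow 2 x).add_const (R ^ 2)
    have hlin : HasDerivAt (fun a : ℝ => 2 * a * R) (2 * R) x := by
      have : HasDerivAt (fun a : ℝ => 2 * a * R) (2 * 1 * R) x :=
        ((hasDerivAt_id x).const_mul 2).mul_const R
      simpa using this
    have := (hpoly.mul hlog).sub hlin
    exact this.congr_deriv (by ring)
  have hdpos : ∀ x ∈ Set.Ioo (0 : ℝ) R,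
      0 < 2 * x * Real.log ((R + x) / (R - x)) + (x ^ 2 + R ^ 2) * (2 * R / ((R - x) ^ 2))
        / ((R + x) / (R - x)) - 2 * R := by
    intro x hx
    obtain ⟨hx0, hxR⟩ := hx
    have h1 : (0 : ℝ) < R + x := by linarith
    have h2 : (0 : ℝ) < R - x := by linarith
    have hL : 0 < Real.log ((R + x) / (R - x)) :=
      Real.log_pos ((one_lt_div h2).mpr (by linarith))
    have hquot : (x ^ 2 + R ^ 2) * (2 * R / ((R - x) ^ 2)) / ((R + x) / (R - x))
        = (x ^ 2 + R ^ 2) * (2 * R) / ((R + x) * (R - x)) := by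
      field_simp
    rw [hquot]
    have h3 : 2 * R < (x ^ 2 + R ^ 2) * (2 * R) / ((R + x) * (R - x)) := by
      rw [lt_div_iff₀ (by positivity)]
      nlinarith [mul_pos (mul_pos hR hx0) hx0]
    nlinarith [mul_pos hx0 hL]
  -- strict monotonicity of g on [0, R)
  have hmono : StrictMonoOn g (Set.Ico 0 R) := by
    apply strictMonoOn_of_deriv_pos (convex_Ico 0 R) hcont
    intro x hx
    rw [interior_Ico] at hx
    rw [(hderiv x hx).deriv]
    exact hdpos x hx
  have hg0 : g 0 = 0 := by
    simp [hgdef, div_self (ne_of_gt hR)]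
  constructor
  · intro a ha
    obtain ⟨ha0, haR⟩ := ha
    have : g 0 < g a := hmono ⟨le_refl 0, hR⟩ ⟨le_of_lt ha0, haR⟩ ha0
    rw [hg0] at this
    exact mul_pos hC this
  · intro a ha b hb hab
    have : g a < g b := hmono ⟨le_of_lt ha.1, ha.2⟩ ⟨le_of_lt hb.1, hb.2⟩ hab
    exact mul_lt_mul_of_pos_left this hC
end

section
/- The function F(a) = (G/(1−ν))·((a² + R²)·log((R+a)/(R−a)) − 2aR) satisfies F(a) → 0 as a → 0⁺ and F(a) → +∞ as a → R⁻; hence by continuity and strict monotonicity, for every target force F* > 0 there exists a unique contact radius a ∈ (0,R) with F(a) = F*. -/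
open Filter Topology

theorem stmt_4 (R G ν : ℝ) (hR : 0 < R) (hG : 0 < G) (hν : ν ∈ Set.Ioo (0 : ℝ) 1)
    (F : ℝ → ℝ)
    (hF : ∀ a, F a = G / (1 - ν) * ((a ^ 2 + R ^ 2) * Real.log ((R + a) / (R - a)) - 2 * a * R)) :
    Tendsto F (𝓝[>] 0) (𝓝 0) ∧
    Tendsto F (𝓝[<] R) atTop ∧
    ∀ Fstar : ℝ, 0 < Fstar → ∃! a : ℝ, a ∈ Set.Ioo (0 : ℝ) R ∧ F a = Fstar := by
  obtain ⟨hν0, hν1⟩ := hν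
  have hC : 0 < G / (1 - ν) := div_pos hG (by linarith)
  have hFeq : F = fun a => G / (1 - ν) * ((a ^ 2 + R ^ 2) * Real.log ((R + a) / (R - a)) - 2 * a * R) :=
    funext hF
  -- continuity
  have hcont : ∀ x : ℝ, -R < x → x < R → ContinuousAt F x := by
    intro x hx1 hx2
    have h1 : R - x ≠ 0 := by linarith
    have h1' : R + x ≠ 0 := by linarith
    have h2 : (R + x) / (R - x) ≠ 0 := div_ne_zero h1' h1
    rw [hFeq]
    apply ContinuousAt.mul continuousAt_const
    apply ContinuousAt.sub
    · apply ContinuousAt.mul (by fun_prop)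
      exact (ContinuousAt.div (by fun_prop) (by fun_prop) h1).log h2
    · fun_prop
  -- derivative
  have hderiv : ∀ x ∈ Set.Ioo (0:ℝ) R, HasDerivAt F
      (G / (1 - ν) * (2*x*Real.log ((R+x)/(R-x)) + 4*R*x^2/(R^2-x^2))) x := by
    intro x hx
    obtain ⟨hx0, hxR⟩ := hx
    have hRx : 0 < R - x := by linarith
    have hRx' : 0 < R + x := by linarith
    have hl1 : HasDerivAt (fun a : ℝ => Real.log (R + a)) (1/(R+x)) x := by
      have := (((hasDerivAt_id x).const_add R).log hRx'.ne')
      simpa using this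
    have hl2 : HasDerivAt (fun a : ℝ => Real.log (R - a)) (-1/(R-x)) x := by
      have := (((hasDerivAt_id x).const_sub R).log hRx.ne')
      simpa using this
    have hpoly : HasDerivAt (fun a : ℝ => a^2 + R^2) (2*x) x := by
      have := (hasDerivAt_pow 2 x).add_const (R^2)
      simpa using this
    have hlin : HasDerivAt (fun a : ℝ => 2*a*R) (2*R) x := by
      have : HasDerivAt (fun a : ℝ => a * (2*R)) (2*R) x := hasDerivAt_mul_const (2*R)
      exact this.congr_deriv rfl |>.congr_of_eventuallyEq (by filter_upwards with a; ring)
    have hD : HasDerivAt (fun a => G / (1 - ν) * ((a ^ 2 + R ^ 2) * (Real.log (R+a) - Real.log (R-a)) - 2 * a * R))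
        (G / (1 - ν) * ((2*x) * (Real.log (R+x) - Real.log (R-x)) + (x^2+R^2) * (1/(R+x) - -1/(R-x)) - 2*R)) x :=
      ((hpoly.mul (hl1.sub hl2)).sub hlin).const_mul _
    have hev : F =ᶠ[𝓝 x] (fun a => G / (1 - ν) * ((a ^ 2 + R ^ 2) * (Real.log (R+a) - Real.log (R-a)) - 2 * a * R)) := by
      have hmem : Set.Ioo (-R) R ∈ 𝓝 x := isOpen_Ioo.mem_nhds ⟨by linarith, hxR⟩
      filter_upwards [hmem] with a ha
      rw [hF a, Real.log_div (by linarith [ha.1] : R + a ≠ 0) (by linarith [ha.2] : R - a ≠ 0)]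
    have := hD.congr_of_eventuallyEq hev
    refine this.congr_deriv ?_
    rw [Real.log_div hRx'.ne' hRx.ne']
    have h3 : R^2 - x^2 ≠ 0 := by nlinarith
    have hν' : (1:ℝ) - ν ≠ 0 := by linarith
    field_simp
    ring
  -- strict monotonicity
  have hmono : StrictMonoOn F (Set.Ioo 0 R) := by
    apply strictMonoOn_of_deriv_pos (convex_Ioo 0 R)
    · intro x hx
      exact (hcont x (by linarith [hx.1]) hx.2).continuousWithinAt
    · intro x hx
      rw [interior_Ioo] at hx
      rw [(hderiv x hx).deriv]
      obtain ⟨hx0, hxR⟩ := hx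
      have hRx : 0 < R - x := by linarith
      have hRx' : 0 < R + x := by linarith
      have hlog : 0 < Real.log ((R+x)/(R-x)) :=
        Real.log_pos ((one_lt_div hRx).mpr (by linarith))
      have hsq : 0 < R^2 - x^2 := by nlinarith
      positivity
  -- limit at 0
  have ht0 : Tendsto F (𝓝[>] 0) (𝓝 0) := by
    have h0 : F 0 = 0 := by
      rw [hF]; simp [div_self hR.ne']
    have h1 := (hcont 0 (by linarith) hR).tendsto
    rw [h0] at h1
    exact h1.mono_left nhdsWithin_le_nhds
  -- limit at R
  have htR : Tendsto F (𝓝[<] R) atTop := by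
    have hnum : Tendsto (fun a : ℝ => R + a) (𝓝[<] R) (𝓝 (2*R)) := by
      have : Tendsto (fun a : ℝ => R + a) (𝓝 R) (𝓝 (R + R)) := Continuous.tendsto (by continuity) R
      simpa [two_mul] using this.mono_left nhdsWithin_le_nhds
    have hden : Tendsto (fun a : ℝ => R - a) (𝓝[<] R) (𝓝[>] 0) := by
      apply tendsto_nhdsWithin_of_tendsto_nhds_of_eventually_within
      · have : Tendsto (fun a : ℝ => R - a) (𝓝 R) (𝓝 (R - R)) := Continuous.tendsto (by continuity) R
        simpa using this.mono_left nhdsWithin_le_nhds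
      · filter_upwards [self_mem_nhdsWithin] with a (ha : a < R)
        simpa using sub_pos.mpr ha
    have hinv : Tendsto (fun a : ℝ => (R - a)⁻¹) (𝓝[<] R) atTop :=
      tendsto_inv_nhdsGT_zero.comp hden
    have hfrac : Tendsto (fun a : ℝ => (R+a)/(R-a)) (𝓝[<] R) atTop := by
      simp_rw [div_eq_mul_inv]
      exact Tendsto.pos_mul_atTop (by positivity) hnum hinv
    have hlog : Tendsto (fun a : ℝ => Real.log ((R+a)/(R-a))) (𝓝[<] R) atTop :=
      Real.tendsto_log_atTop.comp hfrac
    have hsq : Tendsto (fun a : ℝ => a^2 + R^2) (𝓝[<] R) (𝓝 (2*R^2)) := by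
      have : Tendsto (fun a : ℝ => a^2 + R^2) (𝓝 R) (𝓝 (R^2 + R^2)) := Continuous.tendsto (by continuity) R
      simpa [two_mul] using this.mono_left nhdsWithin_le_nhds
    have hmul : Tendsto (fun a : ℝ => (a^2+R^2) * Real.log ((R+a)/(R-a))) (𝓝[<] R) atTop :=
      Tendsto.pos_mul_atTop (by positivity) hsq hlog
    have hsub : Tendsto (fun a : ℝ => (a^2+R^2) * Real.log ((R+a)/(R-a)) - 2*a*R) (𝓝[<] R) atTop := by
      simp_rw [sub_eq_add_neg]
      apply Tendsto.atTop_add hmul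
      have : Tendsto (fun a : ℝ => -(2*a*R)) (𝓝 R) (𝓝 (-(2*R*R))) := Continuous.tendsto (by continuity) R
      exact this.mono_left nhdsWithin_le_nhds
    rw [hFeq]
    exact Tendsto.const_mul_atTop hC hsub
  refine ⟨ht0, htR, ?_⟩
  intro Fstar hFs
  -- point with F < Fstar
  have e0 : ∀ᶠ a in 𝓝[>] (0:ℝ), F a < Fstar ∧ a ∈ Set.Ioo (0:ℝ) R := by
    filter_upwards [ht0.eventually_lt_const hFs, self_mem_nhdsWithin,
      (eventually_lt_nhds hR).filter_mono nhdsWithin_le_nhds] with a h1 h2 h3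
    exact ⟨h1, h2, h3⟩
  obtain ⟨a₀, ha₀F, ha₀⟩ := e0.exists
  -- point with F > Fstar, above a₀
  have e1 : ∀ᶠ a in 𝓝[<] R, Fstar < F a ∧ a₀ < a ∧ a < R := by
    filter_upwards [htR.eventually_gt_atTop Fstar, self_mem_nhdsWithin,
      (eventually_gt_nhds ha₀.2).filter_mono nhdsWithin_le_nhds] with a h1 h2 h3
    exact ⟨h1, h3, h2⟩
  obtain ⟨a₁, ha₁F, ha₁0, ha₁R⟩ := e1.exists
  have hss : Set.Icc a₀ a₁ ⊆ Set.Ioo 0 R := fun x hx =>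
    ⟨lt_of_lt_of_le ha₀.1 hx.1, lt_of_le_of_lt hx.2 ha₁R⟩
  have hcOn : ContinuousOn F (Set.Icc a₀ a₁) := fun x hx =>
    (hcont x (by linarith [(hss hx).1]) (hss hx).2).continuousWithinAt
  obtain ⟨a, haI, haF⟩ := intermediate_value_Icc ha₁0.le hcOn ⟨ha₀F.le, ha₁F.le⟩
  refine ⟨a, ⟨hss haI, haF⟩, ?_⟩
  intro b hb
  exact hmono.injOn hb.1 (hss haI) (hb.2.trans haF.symm)
end
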